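/- For every C > 0, κ > 0 and s ∈ (0,1) there exists C' > 0 with the following property: for all μ₀ > 0 and all nonnegative real numbers x, y, z, N such that x ≤ C·z^{1−s}·y^{s} and such that for every μ ≥ μ₀ one has z ≤ C·exp(κ·μ)·N + (C/μ)·y, it holds that for every ν ≥ μ₀^{1−s}, x ≤ C'·ν^{s/(1−s)}·exp(κ·ν^{1/(1−s)})·N + (C'/ν)·y. -/

import Mathlib

open Real NNReal

private lemma rpow_add_le_aux {a b p : ℝ} (ha : 0 ≤ a) (hb : 0 ≤ b) (hp : 0 ≤ p)
    (hp1 : p ≤ 1) : (a + b) ^ p ≤ a ^ p + b ^ p := by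
  have h := NNReal.rpow_add_le_add_rpow (⟨a, ha⟩ : ℝ≥0) (⟨b, hb⟩ : ℝ≥0) hp hp1
  have h' := NNReal.coe_le_coe.2 h
  exact h'

/-- Arithmetic content of the interpolation corollary of the quantitative unique
continuation theorem: an interpolation inequality combined with a unique-continuation
estimate at scale `μ` yields an estimate at the rescaled parameter `ν = μ^{1-s}`. -/
theorem stmt_3 (C κ s : ℝ) (hC : 0 < C) (hκ : 0 < κ) (hs : s ∈ Set.Ioo (0 : ℝ) 1) :
    ∃ C' : ℝ, 0 < C' ∧
      ∀ μ₀ x y z N : ℝ, 0 < μ₀ → 0 ≤ x → 0 ≤ y → 0 ≤ z → 0 ≤ N →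
        x ≤ C * z ^ (1 - s) * y ^ s →
        (∀ μ : ℝ, μ₀ ≤ μ → z ≤ C * Real.exp (κ * μ) * N + (C / μ) * y) →
        ∀ ν : ℝ, μ₀ ^ (1 - s) ≤ ν →
          x ≤ C' * ν ^ (s / (1 - s)) * Real.exp (κ * ν ^ (1 / (1 - s))) * N + (C' / ν) * y := by
  obtain ⟨hs0, hs1⟩ := hs
  have h1s : (0 : ℝ) < 1 - s := by linarith
  refine ⟨C * C + C + C ^ (2 - s) + 1, by positivity, ?_⟩
  intro μ₀ x y z N hμ₀ hx hy hz hN hinterp huc ν hν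
  set μ : ℝ := ν ^ (1 / (1 - s)) with hμdef
  have hν0 : 0 < ν := lt_of_lt_of_le (rpow_pos_of_pos hμ₀ _) hν
  have hμpos : 0 < μ := rpow_pos_of_pos hν0 _
  have hμge : μ₀ ≤ μ := by
    calc μ₀ = (μ₀ ^ (1 - s)) ^ (1 / (1 - s)) := by
            rw [← Real.rpow_mul hμ₀.le, mul_one_div, div_self h1s.ne', Real.rpow_one]
      _ ≤ μ := Real.rpow_le_rpow (rpow_nonneg hμ₀.le _) hν (by positivity)
  have hμν : μ ^ (1 - s) = ν := by
    rw [hμdef, ← Real.rpow_mul hν0.le, one_div, inv_mul_cancel₀ h1s.ne', Real.rpow_one]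
  -- unique continuation at μ
  have hzμ := huc μ hμge
  set a : ℝ := C * Real.exp (κ * μ) * N with ha
  have ha0 : 0 ≤ a := by positivity
  have hb0 : 0 ≤ C / μ * y := by positivity
  -- subadditivity of rpow
  have hsub : z ^ (1 - s) ≤ a ^ (1 - s) + (C / μ * y) ^ (1 - s) := by
    calc z ^ (1 - s) ≤ (a + C / μ * y) ^ (1 - s) :=
          Real.rpow_le_rpow hz hzμ h1s.le
      _ ≤ _ := rpow_add_le_aux ha0 hb0 h1s.le (by linarith)
  have hys : 0 ≤ y ^ s := rpow_nonneg hy _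
  have key : x ≤ C * (a ^ (1 - s) * y ^ s) + C * ((C / μ * y) ^ (1 - s) * y ^ s) := by
    calc x ≤ C * z ^ (1 - s) * y ^ s := hinterp
      _ ≤ C * (a ^ (1 - s) + (C / μ * y) ^ (1 - s)) * y ^ s := by
          apply mul_le_mul_of_nonneg_right _ hys
          exact mul_le_mul_of_nonneg_left hsub hC.le
      _ = _ := by ring
  -- second term: (C/μ * y)^(1-s) * y^s = C^(1-s) / ν * y
  have hterm2 : (C / μ * y) ^ (1 - s) * y ^ s = C ^ (1 - s) / ν * y := by
    rw [mul_rpow (by positivity) hy, mul_assoc, ← Real.rpow_add' hy (by norm_num),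
      sub_add_cancel, Real.rpow_one, Real.div_rpow hC.le hμpos.le, hμν]
  rw [hterm2] at key
  -- first term: Young / weighted AM-GM
  have hterm1 : a ^ (1 - s) * y ^ s ≤ (1 - s) * (ν ^ (s / (1 - s)) * a) + s * (y / ν) := by
    have h := Real.geom_mean_le_arith_mean2_weighted (w₁ := 1 - s) (w₂ := s)
      (p₁ := ν ^ (s / (1 - s)) * a) (p₂ := y / ν) h1s.le hs0.le
      (mul_nonneg (rpow_nonneg hν0.le _) ha0) (div_nonneg hy hν0.le) (by ring)
    have hlhs : (ν ^ (s / (1 - s)) * a) ^ (1 - s) * (y / ν) ^ s = a ^ (1 - s) * y ^ s := by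
      rw [mul_rpow (rpow_nonneg hν0.le _) ha0, ← Real.rpow_mul hν0.le,
        div_mul_cancel₀ _ h1s.ne', Real.div_rpow hy hν0.le]
      field_simp
    rwa [hlhs] at h
  have hCC : C ^ (1 - s) * C = C ^ (2 - s) := by
    have h := Real.rpow_add hC (1 - s) 1
    rw [Real.rpow_one] at h
    rw [← h]
    congr 1
    ring
  have hK : (0:ℝ) < C * C + C + C ^ (2 - s) + 1 := by positivity
  -- put it together
  calc x ≤ C * (a ^ (1 - s) * y ^ s) + C * (C ^ (1 - s) / ν * y) := key
    _ ≤ C * ((1 - s) * (ν ^ (s / (1 - s)) * a) + s * (y / ν)) + C * (C ^ (1 - s) / ν * y) := by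
        have := mul_le_mul_of_nonneg_left hterm1 hC.le
        linarith
    _ ≤ (C * C + C + C ^ (2 - s) + 1) * ν ^ (s / (1 - s)) * Real.exp (κ * μ) * N
        + ((C * C + C + C ^ (2 - s) + 1) / ν) * y := by
        have hνp : 0 ≤ ν ^ (s / (1 - s)) := rpow_nonneg hν0.le _
        have e1 : C * ((1 - s) * (ν ^ (s / (1 - s)) * a))
            ≤ (C * C + C + C ^ (2 - s) + 1) * ν ^ (s / (1 - s)) * Real.exp (κ * μ) * N := by
          rw [ha]
          have h1 : C * (1 - s) * C ≤ C * C + C + C ^ (2 - s) + 1 := by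
            nlinarith [rpow_pos_of_pos hC (2 - s), sq_nonneg C]
          calc C * ((1 - s) * (ν ^ (s / (1 - s)) * (C * Real.exp (κ * μ) * N)))
              = (C * (1 - s) * C) * ν ^ (s / (1 - s)) * Real.exp (κ * μ) * N := by ring
            _ ≤ _ := by gcongr
        have e2 : C * (s * (y / ν)) + C * (C ^ (1 - s) / ν * y)
            ≤ ((C * C + C + C ^ (2 - s) + 1) / ν) * y := by
          have h2 : C * s + C * C ^ (1 - s) ≤ C * C + C + C ^ (2 - s) + 1 := by
            nlinarith [hCC]
          have heq : C * (s * (y / ν)) + C * (C ^ (1 - s) / ν * y)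
              = (C * s + C * C ^ (1 - s)) / ν * y := by
            field_simp
          rw [heq]
          gcongr
        linarith
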